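/- Conversely, if u ∈ R^n_{>0} and v ∈ R^m_{>0} satisfy the marginal constraints diag(u) K diag(v) 1 = r and (diag(u) K diag(v))ᵀ 1 = c with K_{ij} = exp(−C_{ij}/ε), then Π = diag(u) K diag(v) is the unique minimizer of the entropy-regularized OT problem over the transportation polytope U(r,c). -/

import Mathlib

/-- Pointwise Gibbs inequality, strict version. -/
lemma ent_lt {p q : ℝ} (hp : 0 < p) (hq : 0 ≤ q) (hne : q ≠ p) :
    q - p < q * Real.log q - q * Real.log p := by
  rcases eq_or_lt_of_le hq with h0 | h0
  · simp [← h0]; linarith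
  · have hx : (0:ℝ) < p / q := div_pos hp h0
    have hne1 : p / q ≠ 1 := by
      intro h
      exact hne ((div_eq_one_iff_eq (ne_of_gt h0)).mp h).symm
    have hlog := Real.log_lt_sub_one_of_pos hx hne1
    rw [Real.log_div (ne_of_gt hp) (ne_of_gt h0)] at hlog
    have h2 := (mul_lt_mul_iff_right₀ h0).mpr hlog
    have h3 : q * (p / q) = p := mul_div_cancel₀ p (ne_of_gt h0)
    nlinarith

lemma ent_le {p q : ℝ} (hp : 0 < p) (hq : 0 ≤ q) :
    q - p ≤ q * Real.log q - q * Real.log p := by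
  by_cases h : q = p
  · subst h; simp
  · exact (ent_lt hp hq h).le

/-- If strictly positive `u, v` satisfy the marginal constraints for
`P i j = u i * exp (-C i j / ε) * v j`, then `P` is the unique minimizer of the
entropy-regularized OT problem over the transportation polytope `U(r,c)`. -/
theorem entropic_ot_scaling_is_unique_minimizer
    (n m : ℕ) (C : Matrix (Fin n) (Fin m) ℝ) (ε : ℝ) (hε : 0 < ε)
    (r : Fin n → ℝ) (c : Fin m → ℝ)
    (hr : ∀ i, 0 < r i) (hc : ∀ j, 0 < c j)
    (hr1 : ∑ i, r i = 1) (hc1 : ∑ j, c j = 1)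
    (u : Fin n → ℝ) (v : Fin m → ℝ)
    (hu : ∀ i, 0 < u i) (hv : ∀ j, 0 < v j)
    (hrow : ∀ i, ∑ j, u i * Real.exp (-C i j / ε) * v j = r i)
    (hcol : ∀ j, ∑ i, u i * Real.exp (-C i j / ε) * v j = c j) :
    (∀ i j, 0 ≤ u i * Real.exp (-C i j / ε) * v j) ∧
    (∀ i, ∑ j, u i * Real.exp (-C i j / ε) * v j = r i) ∧
    (∀ j, ∑ i, u i * Real.exp (-C i j / ε) * v j = c j) ∧
    (∀ Q : Matrix (Fin n) (Fin m) ℝ,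
      ((∀ i j, 0 ≤ Q i j) ∧ (∀ i, ∑ j, Q i j = r i) ∧ (∀ j, ∑ i, Q i j = c j)) →
      Q ≠ (fun i j => u i * Real.exp (-C i j / ε) * v j) →
      (∑ i, ∑ j, (C i j * (u i * Real.exp (-C i j / ε) * v j)
          + ε * ((u i * Real.exp (-C i j / ε) * v j)
              * Real.log (u i * Real.exp (-C i j / ε) * v j)))) <
        ∑ i, ∑ j, (C i j * Q i j + ε * (Q i j * Real.log (Q i j)))) := by
  set P : Matrix (Fin n) (Fin m) ℝ := fun i j => u i * Real.exp (-C i j / ε) * v j with hPdef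
  have hPpos : ∀ i j, 0 < P i j := fun i j =>
    mul_pos (mul_pos (hu i) (Real.exp_pos _)) (hv j)
  have hεne : ε ≠ 0 := ne_of_gt hε
  have hlogP : ∀ i j, Real.log (P i j)
      = Real.log (u i) + (-C i j / ε) + Real.log (v j) := by
    intro i j
    rw [hPdef]
    simp only []
    rw [Real.log_mul (mul_pos (hu i) (Real.exp_pos _)).ne' (ne_of_gt (hv j)),
        Real.log_mul (ne_of_gt (hu i)) (ne_of_gt (Real.exp_pos _)),
        Real.log_exp]
  refine ⟨fun i j => (hPpos i j).le, hrow, hcol, ?_⟩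
  rintro Q ⟨hQ0, hQr, hQc⟩ hQne
  -- pointwise rewrites
  have hCP : ∀ i j, C i j * P i j + ε * (P i j * Real.log (P i j))
      = ε * (Real.log (u i) + Real.log (v j)) * P i j := by
    intro i j
    rw [hlogP i j]; field_simp; ring
  have hCQ : ∀ i j, C i j * Q i j + ε * (Q i j * Real.log (Q i j))
      = ε * (Real.log (u i) + Real.log (v j)) * Q i j
        + ε * (Q i j * Real.log (Q i j) - Q i j * Real.log (P i j)) := by
    intro i j
    rw [hlogP i j]; field_simp; ring
  -- marginal-equality lemma
  have key : ∀ M : Matrix (Fin n) (Fin m) ℝ,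
      (∀ i, ∑ j, M i j = r i) → (∀ j, ∑ i, M i j = c j) →
      ∑ i, ∑ j, ε * (Real.log (u i) + Real.log (v j)) * M i j
        = ε * ∑ i, Real.log (u i) * r i + ε * ∑ j, Real.log (v j) * c j := by
    intro M hMr hMc
    have h1 : ∀ i j, ε * (Real.log (u i) + Real.log (v j)) * M i j
        = ε * (Real.log (u i) * M i j) + ε * (Real.log (v j) * M i j) := by
      intros; ring
    simp_rw [h1, Finset.sum_add_distrib]
    congr 1
    · simp_rw [← Finset.mul_sum, ← hMr]
    · rw [Finset.sum_comm]
      simp_rw [← Finset.mul_sum, ← hMc]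
  -- existence of a differing entry
  have hne' : ∃ i j, Q i j ≠ P i j := by
    by_contra h
    push_neg at h
    exact hQne (by funext i j; exact h i j)
  obtain ⟨i0, j0, hij⟩ := hne'
  -- strict KL positivity
  have hKL : 0 < ∑ i, ∑ j, (Q i j * Real.log (Q i j) - Q i j * Real.log (P i j)) := by
    have hz : ∑ i, ∑ j, (Q i j - P i j) = 0 := by
      have hProw : ∀ i, ∑ j, P i j = r i := hrow
      simp [Finset.sum_sub_distrib, hQr, hProw]
    calc (0:ℝ) = ∑ i, ∑ j, (Q i j - P i j) := hz.symm
      _ < _ := by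
        refine Finset.sum_lt_sum (fun i _ => Finset.sum_le_sum fun j _ =>
          ent_le (hPpos i j) (hQ0 i j)) ⟨i0, Finset.mem_univ i0, ?_⟩
        refine Finset.sum_lt_sum (fun j _ => ent_le (hPpos i0 j) (hQ0 i0 j))
          ⟨j0, Finset.mem_univ j0, ent_lt (hPpos i0 j0) (hQ0 i0 j0) hij⟩
  -- assemble
  change ∑ i, ∑ j, (C i j * P i j + ε * (P i j * Real.log (P i j))) <
    ∑ i, ∑ j, (C i j * Q i j + ε * (Q i j * Real.log (Q i j)))
  simp_rw [hCP, hCQ, Finset.sum_add_distrib]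
  rw [key P hrow hcol, key Q hQr hQc]
  have : 0 < ∑ i, ∑ j, ε * (Q i j * Real.log (Q i j) - Q i j * Real.log (P i j)) := by
    simp_rw [← Finset.mul_sum]
    exact mul_pos hε hKL
  linarith
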